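/- Viewing S_σ as a cyclic string, for every a < σ−1 and every b ∈ {0,…,σ−1}, the 2-gram ab occurs exactly twice in S_σ (cyclically), and the set of characters c such that abc occurs as a cyclic 3-gram of S_σ is exactly {a, a+1}. -/

import Mathlib

open List

/-- Block for symbol `a`: pairs (a,0)(a,1)⋯(a,σ-1) followed by a repeat of (a,σ-1). -/
def block (σ a : ℕ) : List ℕ :=
  ((List.range σ).flatMap fun b => [a, b]) ++ [a, σ - 1]

/-- The string S_σ: blocks for a = 0,…,σ-2 followed by the pair (σ-1,σ-1). -/
def Sstr (σ : ℕ) : List ℕ :=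
  ((List.range (σ - 1)).flatMap fun a => block σ a) ++ [σ - 1, σ - 1]

/-- Rotation of `S` by offset `i`. -/
def rot (S : List ℕ) (i : ℕ) : List ℕ := S.drop i ++ S.take i

/-- Cyclic k-gram of `S` starting at position `i` (indices mod `S.length`). -/
def cyc (S : List ℕ) (i k : ℕ) : List ℕ :=
  (List.range k).map fun j => S.getD ((i + j) % S.length) 0

/-- Number of cyclic occurrences of `u` in `S`. -/
def cOcc (S u : List ℕ) : ℕ :=
  ((List.range S.length).filter fun i => cyc S i u.length = u).length

/-- `u` occurs as a cyclic substring of `S`. -/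
def cOccurs (S u : List ℕ) : Prop := 0 < cOcc S u

/-- Number of runs (maximal blocks of equal symbols) of a list. -/
def runsCount (l : List ℕ) : ℕ := (l.destutter (· ≠ ·)).length

/-- Cyclic Burrows–Wheeler transform: sort all rotations lexicographically,
read the last column. -/
def cBWT (S : List ℕ) : List ℕ :=
  (((List.range S.length).map fun i => rot S i).insertionSort (· ≤ ·)).map
    fun ρ => ρ.getD (S.length - 1) 0

/-- Terminated string `t$`: symbols shifted by +1 and sentinel `0 = $` appended,
so the sentinel is strictly smaller than all alphabet symbols. -/
def term (t : List ℕ) : List ℕ := (t.map (· + 1)) ++ [0]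

/-- BWT of the terminated string `t$`: last column of the sorted rotation matrix. -/
def bwt (t : List ℕ) : List ℕ :=
  (((List.range (term t).length).map fun i => rot (term t) i).insertionSort (· ≤ ·)).map
    fun ρ => ρ.getD ((term t).length - 1) 0

/-- `x` is right-maximal in `w`: two distinct right extensions of `x` occur in `w`. -/
def RightMaximal (w x : List ℕ) : Prop :=
  ∃ a b : ℕ, a ≠ b ∧ (x ++ [a]) <:+: w ∧ (x ++ [b]) <:+: w

/-- The set of right-extensions of `w`. -/
def ExtSet (w : List ℕ) : Set (List ℕ) :=
  {y | ∃ x a, RightMaximal w x ∧ y = x ++ [a] ∧ y <:+: w}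

/-- Super-maximal right-extensions: right-extensions that are not a proper suffix
of another right-extension. -/
def SuperMax (w : List ℕ) : Set (List ℕ) :=
  {y ∈ ExtSet w | ∀ z ∈ ExtSet w, y <:+ z → y = z}

/-- χ: size of a smallest suffixient set = number of super-maximal right-extensions. -/
noncomputable def chi (w : List ℕ) : ℕ := (SuperMax w).ncard

/-- The regular cBWT block: each of 0,…,σ-1 twice in increasing order. -/
def patBlock (σ : ℕ) : List ℕ := (List.range σ).flatMap fun c => [c, c]

/-- The final irregular cBWT block: each of 0,…,σ-3 twice, then σ-2, σ-1, σ-2. -/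
def patFinal (σ : ℕ) : List ℕ :=
  ((List.range (σ - 2)).flatMap fun c => [c, c]) ++ [σ - 2, σ - 1, σ - 2]

/-- The canonical cBWT pattern: (σ-1) · (regular block)^m · final block. -/
def pattern (σ m : ℕ) : List ℕ :=
  [σ - 1] ++ (List.replicate m (patBlock σ)).flatten ++ patFinal σ

/-- `S` is 2-branching at order `k` over alphabet {0,…,σ-1}: every (k-1)-gram
occurs and its set of k-gram extensions is {u[0], (u[0]+1) mod σ}. -/
def TwoBranching (σ k : ℕ) (S : List ℕ) : Prop :=
  ∀ u : List ℕ, u.length = k - 1 → (∀ x ∈ u, x < σ) →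
    cOccurs S u ∧ ∀ c, c < σ →
      (cOccurs S (u ++ [c]) ↔ c = u.headD 0 ∨ c = (u.headD 0 + 1) % σ)

section Aux

lemma flatMap_len (f : ℕ → List ℕ) (L : ℕ) (hL : ∀ a, (f a).length = L) (l : List ℕ) :
    (l.flatMap f).length = l.length * L := by
  induction l with
  | nil => simp
  | cons x xs ih => simp [List.flatMap_cons, hL, ih, Nat.succ_mul]; ring

lemma range_split (m q : ℕ) (hq : q < m) :
    List.range m = List.range q ++ [q] ++ List.range' (q+1) (m-q-1) := by
  have h1 : List.range' 0 q ++ List.range' q (m - q) = List.range' 0 (m - q + q) :=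
    by simpa [Nat.add_comm] using List.range'_append (s := 0) (m := q) (n := m-q) (step := 1)
  have hmq : m - q + q = m := by omega
  rw [hmq] at h1
  have h2 : List.range' q (m - q) = q :: List.range' (q+1) (m-q-1) := by
    have h3 : m - q = (m - q - 1) + 1 := by omega
    rw [h3, List.range'_succ]
    simp
  rw [List.range_eq_range', ← h1, h2, List.range_eq_range']
  simp

lemma getD_flatMap_range (f : ℕ → List ℕ) (L : ℕ) (hL : ∀ a, (f a).length = L)
    (m q r : ℕ) (hq : q < m) (hr : r < L) :
    ((List.range m).flatMap f).getD (L*q+r) 0 = (f q).getD r 0 := by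
  rw [range_split m q hq, List.flatMap_append, List.flatMap_append]
  have hlen : ((List.range q).flatMap f).length = q * L := by
    rw [flatMap_len f L hL]; simp
  have hfq : (f q).length = L := hL q
  have hq2 : ([q].flatMap f).length = L := by simp [List.flatMap_cons, hfq]
  have hql : q * L = L * q := Nat.mul_comm _ _
  have h1 : ((List.range q).flatMap f ++ [q].flatMap f).length = q * L + L := by
    rw [List.length_append, hlen, hq2]
  have htot : L*q+r < (((List.range q).flatMap f ++ [q].flatMap f) ++ (List.range' (q+1) (m-q-1)).flatMap f).length := by
    rw [List.length_append, h1]; omega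
  rw [List.getD_eq_getElem _ _ htot]
  rw [List.getElem_append_left (by omega : L*q+r < ((List.range q).flatMap f ++ [q].flatMap f).length)]
  rw [List.getElem_append_right (by omega : ((List.range q).flatMap f).length ≤ L*q+r)]
  have hidx : L*q+r - ((List.range q).flatMap f).length = r := by omega
  simp only [hidx, List.flatMap_cons, List.flatMap_nil, List.append_nil]
  rw [List.getD_eq_getElem _ _ (by omega)]

lemma pair_len (a : ℕ) : ∀ b : ℕ, ([a, b] : List ℕ).length = 2 := fun _ => rfl

lemma block_flat_len (σ a : ℕ) : ((List.range σ).flatMap fun b => [a, b]).length = 2*σ := by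
  rw [flatMap_len (fun b => [a, b]) 2 (pair_len a)]; simp; ring

lemma block_len (σ a : ℕ) : (block σ a).length = 2*σ+2 := by
  rw [block, List.length_append, block_flat_len]; rfl

lemma Sstr_flat_len (σ : ℕ) :
    ((List.range (σ-1)).flatMap fun a => block σ a).length = (σ-1) * (2*σ+2) := by
  rw [flatMap_len (fun a => block σ a) (2*σ+2) (block_len σ)]; simp

lemma Sstr_len (σ : ℕ) (hσ : 2 ≤ σ) : (Sstr σ).length = 2*σ^2 := by
  rw [Sstr, List.length_append, Sstr_flat_len]
  obtain ⟨t, rfl⟩ : ∃ t, σ = t + 2 := ⟨σ - 2, by omega⟩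
  have h : t + 2 - 1 = t + 1 := rfl
  rw [h]; simp [List.length_cons]; ring

lemma block_getD0 (σ a j : ℕ) (hj : j < σ) : (block σ a).getD (2*j) 0 = a := by
  rw [block, List.getD_append _ _ _ _ (by rw [block_flat_len]; omega)]
  have := getD_flatMap_range (fun b => [a, b]) 2 (pair_len a) σ j 0 hj (by omega)
  simpa using this

lemma block_getD1 (σ a j : ℕ) (hj : j < σ) : (block σ a).getD (2*j+1) 0 = j := by
  rw [block, List.getD_append _ _ _ _ (by rw [block_flat_len]; omega)]
  have := getD_flatMap_range (fun b => [a, b]) 2 (pair_len a) σ j 1 hj (by omega)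
  simpa using this

lemma block_getD2 (σ a : ℕ) : (block σ a).getD (2*σ) 0 = a := by
  rw [block, List.getD_append_right _ _ _ _ (by rw [block_flat_len])]
  rw [block_flat_len]; simp

lemma block_getD3 (σ a : ℕ) : (block σ a).getD (2*σ+1) 0 = σ - 1 := by
  rw [block, List.getD_append_right _ _ _ _ (by rw [block_flat_len]; omega)]
  rw [block_flat_len]
  have : 2*σ+1-2*σ = 1 := by omega
  rw [this]; rfl

lemma Sstr_getD (σ q r : ℕ) (hq : q < σ - 1) (hr : r < 2*σ+2) :
    (Sstr σ).getD ((2*σ+2)*q + r) 0 = (block σ q).getD r 0 := by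
  have hlt : (2*σ+2)*q + r < (σ-1) * (2*σ+2) := by
    calc (2*σ+2)*q + r < (2*σ+2)*q + (2*σ+2) := by omega
    _ = (2*σ+2)*(q+1) := by ring
    _ ≤ (2*σ+2)*(σ-1) := Nat.mul_le_mul_left _ (by omega)
    _ = (σ-1)*(2*σ+2) := Nat.mul_comm _ _
  rw [Sstr, List.getD_append _ _ _ _ (by rw [Sstr_flat_len]; omega),
      getD_flatMap_range _ (2*σ+2) (block_len σ) (σ-1) q r hq hr]

lemma Sstr_getD_tail (σ j : ℕ) (hj : j < 2) :
    (Sstr σ).getD ((2*σ+2)*(σ-1) + j) 0 = σ - 1 := by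
  have hql : (σ-1) * (2*σ+2) = (2*σ+2)*(σ-1) := Nat.mul_comm _ _
  rw [Sstr, List.getD_append_right _ _ _ _ (by rw [Sstr_flat_len]; omega),
      Sstr_flat_len]
  have h : (2*σ+2)*(σ-1)+j - (σ-1)*(2*σ+2) = j := by omega
  rw [h]
  interval_cases j <;> rfl

lemma nval (σ : ℕ) (hσ : 2 ≤ σ) : (2*σ+2)*(σ-1)+2 = 2*σ^2 := by
  obtain ⟨t, rfl⟩ : ∃ t, σ = t + 2 := ⟨σ - 2, by omega⟩
  have h : t + 2 - 1 = t + 1 := rfl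
  rw [h]; ring

lemma classify (σ a b i : ℕ) (hσ : 2 ≤ σ) (ha : a < σ-1) (hb : b < σ) (hi : i < 2*σ^2)
    (h1 : (Sstr σ).getD i 0 = a)
    (h2 : (Sstr σ).getD ((i+1) % (2*σ^2)) 0 = b) :
    i = (2*σ+2)*a + 2*b ∨ i = (if b+1 = σ then (2*σ+2)*a+2*σ else (2*σ+2)*b+2*a+1) := by
  have hnn : (2*σ+2)*(σ-1)+2 = 2*σ^2 := nval σ hσ
  obtain ⟨q, r, hr, hiq⟩ : ∃ q r, r < 2*σ+2 ∧ i = (2*σ+2)*q + r :=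
    ⟨i / (2*σ+2), i % (2*σ+2), Nat.mod_lt _ (by omega), (Nat.div_add_mod i (2*σ+2)).symm⟩
  by_cases hql : q < σ - 1
  · -- i is inside block q
    have hblock : ∀ r' < 2*σ+2, (Sstr σ).getD ((2*σ+2)*q + r') 0 = (block σ q).getD r' 0 :=
      fun r' hr' => Sstr_getD σ q r' hql hr'
    have hboundq : (2*σ+2)*(q+1) ≤ (2*σ+2)*(σ-1) := Nat.mul_le_mul_left _ (by omega)
    have hsucc : (2*σ+2)*(q+1) = (2*σ+2)*q + (2*σ+2) := Nat.mul_succ _ _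
    rcases Nat.mod_two_eq_zero_or_one r with hpar|hpar
    · -- r = 2j even
      obtain ⟨j, rfl⟩ : ∃ j, r = 2*j := ⟨r/2, by omega⟩
      by_cases hjσ : j < σ
      · have e1 : (Sstr σ).getD i 0 = q := by rw [hiq, hblock _ hr, block_getD0 σ q j hjσ]
        have hqa : q = a := by rw [e1] at h1; exact h1
        have hi1 : i + 1 < 2*σ^2 := by omega
        have e2 : (Sstr σ).getD ((i+1) % (2*σ^2)) 0 = j := by
          rw [Nat.mod_eq_of_lt hi1, hiq, show (2*σ+2)*q + 2*j + 1 = (2*σ+2)*q + (2*j+1) by ring,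
              hblock _ (by omega), block_getD1 σ q j hjσ]
        have hjb : j = b := by rw [e2] at h2; exact h2
        subst hqa; subst hjb; left; exact hiq
      · -- j = σ, r = 2σ
        rw [show j = σ by omega] at hiq hr
        have e1 : (Sstr σ).getD i 0 = q := by rw [hiq, hblock _ hr, block_getD2 σ q]
        have hqa : q = a := by rw [e1] at h1; exact h1
        have hi1 : i + 1 < 2*σ^2 := by omega
        have e2 : (Sstr σ).getD ((i+1) % (2*σ^2)) 0 = σ - 1 := by
          rw [Nat.mod_eq_of_lt hi1, hiq, show (2*σ+2)*q + 2*σ + 1 = (2*σ+2)*q + (2*σ+1) by ring,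
              hblock _ (by omega), block_getD3 σ q]
        have hb1 : b = σ - 1 := by rw [e2] at h2; omega
        subst hqa; right; rw [if_pos (by omega)]; exact hiq
    · -- r = 2j+1 odd
      obtain ⟨j, rfl⟩ : ∃ j, r = 2*j+1 := ⟨r/2, by omega⟩
      by_cases hjσ : j < σ
      · have e1 : (Sstr σ).getD i 0 = j := by rw [hiq, hblock _ hr, block_getD1 σ q j hjσ]
        have hja : j = a := by rw [e1] at h1; exact h1
        subst hja
        have hi1 : i + 1 < 2*σ^2 := by omega
        have hj1 : j + 1 < σ := by omega
        have e2 : (Sstr σ).getD ((i+1) % (2*σ^2)) 0 = q := by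
          rw [Nat.mod_eq_of_lt hi1, hiq, show (2*σ+2)*q + (2*j+1) + 1 = (2*σ+2)*q + 2*(j+1) by ring,
              hblock _ (by omega), block_getD0 σ q (j+1) hj1]
        have hqb : q = b := by rw [e2] at h2; exact h2
        subst hqb; right; rw [if_neg (by omega)]; omega
      · -- r = 2σ+1
        rw [show j = σ by omega] at hiq hr
        have e1 : (Sstr σ).getD i 0 = σ - 1 := by rw [hiq, hblock _ hr, block_getD3 σ q]
        omega
  · -- tail case
    have hq1 : q = σ - 1 := by
      by_contra hne
      have hq2 : σ - 1 + 1 ≤ q := by omega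
      have h3 := Nat.mul_le_mul_left (2*σ+2) hq2
      have hexp : (2*σ+2)*(σ-1+1) = (2*σ+2)*(σ-1) + (2*σ+2) := Nat.mul_succ _ _
      omega
    subst hq1
    have hr2 : r < 2 := by omega
    have e1 : (Sstr σ).getD i 0 = σ - 1 := by rw [hiq, Sstr_getD_tail σ r hr2]
    omega

/-- values at the first occurrence position. -/
lemma occ1 (σ a b : ℕ) (hσ : 2 ≤ σ) (ha : a < σ-1) (hb : b < σ) :
    ((2*σ+2)*a + 2*b) + 2 < 2*σ^2 ∧
    (Sstr σ).getD ((2*σ+2)*a + 2*b) 0 = a ∧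
    (Sstr σ).getD ((2*σ+2)*a + 2*b + 1) 0 = b ∧
    (Sstr σ).getD ((2*σ+2)*a + 2*b + 2) 0 = a := by
  have hnn := nval σ hσ
  have hba : (2*σ+2)*a + (2*σ+2) ≤ (2*σ+2)*(σ-1) := by
    have := Nat.mul_le_mul_left (2*σ+2) (show a+1 ≤ σ-1 by omega)
    have hs : (2*σ+2)*(a+1) = (2*σ+2)*a + (2*σ+2) := Nat.mul_succ _ _
    omega
  refine ⟨by omega, ?_, ?_, ?_⟩
  · rw [Sstr_getD σ a (2*b) ha (by omega), block_getD0 σ a b hb]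
  · rw [show (2*σ+2)*a + 2*b + 1 = (2*σ+2)*a + (2*b+1) by ring,
        Sstr_getD σ a (2*b+1) ha (by omega), block_getD1 σ a b hb]
  · by_cases hb1 : b + 1 < σ
    · rw [show (2*σ+2)*a + 2*b + 2 = (2*σ+2)*a + 2*(b+1) by ring,
          Sstr_getD σ a (2*(b+1)) ha (by omega), block_getD0 σ a (b+1) hb1]
    · rw [show (2*σ+2)*a + 2*b + 2 = (2*σ+2)*a + 2*σ by omega,
          Sstr_getD σ a (2*σ) ha (by omega), block_getD2 σ a]

/-- values at the second occurrence position, case b = σ-1. -/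
lemma occ2a (σ a : ℕ) (hσ : 2 ≤ σ) (ha : a < σ-1) :
    ((2*σ+2)*a + 2*σ) + 2 < 2*σ^2 ∧
    (Sstr σ).getD ((2*σ+2)*a + 2*σ) 0 = a ∧
    (Sstr σ).getD ((2*σ+2)*a + 2*σ + 1) 0 = σ-1 ∧
    (Sstr σ).getD ((2*σ+2)*a + 2*σ + 2) 0 = a+1 := by
  have hnn := nval σ hσ
  have hba : (2*σ+2)*(a+1) ≤ (2*σ+2)*(σ-1) := Nat.mul_le_mul_left (2*σ+2) (by omega)
  have hs : (2*σ+2)*(a+1) = (2*σ+2)*a + (2*σ+2) := Nat.mul_succ _ _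
  refine ⟨by omega, ?_, ?_, ?_⟩
  · rw [Sstr_getD σ a (2*σ) ha (by omega), block_getD2 σ a]
  · rw [show (2*σ+2)*a + 2*σ + 1 = (2*σ+2)*a + (2*σ+1) by ring,
        Sstr_getD σ a (2*σ+1) ha (by omega), block_getD3 σ a]
  · have hidx : (2*σ+2)*a + 2*σ + 2 = (2*σ+2)*(a+1) + 0 := by omega
    rw [hidx]
    by_cases ha1 : a + 1 < σ - 1
    · rw [Sstr_getD σ (a+1) 0 ha1 (by omega),
          show (0:ℕ) = 2*0 by ring, block_getD0 σ (a+1) 0 (by omega)]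
    · rw [show a + 1 = σ - 1 by omega, Sstr_getD_tail σ 0 (by omega)]

/-- values at the second occurrence position, case b < σ-1. -/
lemma occ2b (σ a b : ℕ) (hσ : 2 ≤ σ) (ha : a < σ-1) (hb : b < σ-1) :
    ((2*σ+2)*b + 2*a + 1) + 2 < 2*σ^2 ∧
    (Sstr σ).getD ((2*σ+2)*b + 2*a + 1) 0 = a ∧
    (Sstr σ).getD ((2*σ+2)*b + 2*a + 1 + 1) 0 = b ∧
    (Sstr σ).getD ((2*σ+2)*b + 2*a + 1 + 2) 0 = a+1 := by
  have hnn := nval σ hσ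
  have hba : (2*σ+2)*(b+1) ≤ (2*σ+2)*(σ-1) := Nat.mul_le_mul_left (2*σ+2) (by omega)
  have hs : (2*σ+2)*(b+1) = (2*σ+2)*b + (2*σ+2) := Nat.mul_succ _ _
  refine ⟨by omega, ?_, ?_, ?_⟩
  · rw [show (2*σ+2)*b + 2*a + 1 = (2*σ+2)*b + (2*a+1) by ring,
        Sstr_getD σ b (2*a+1) hb (by omega), block_getD1 σ b a (by omega)]
  · rw [show (2*σ+2)*b + 2*a + 1 + 1 = (2*σ+2)*b + 2*(a+1) by ring,
        Sstr_getD σ b (2*(a+1)) hb (by omega), block_getD0 σ b (a+1) (by omega)]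
  · rw [show (2*σ+2)*b + 2*a + 1 + 2 = (2*σ+2)*b + (2*(a+1)+1) by ring,
        Sstr_getD σ b (2*(a+1)+1) hb (by omega), block_getD1 σ b (a+1) (by omega)]

lemma cyc2 (S : List ℕ) (i : ℕ) :
    cyc S i 2 = [S.getD (i % S.length) 0, S.getD ((i+1) % S.length) 0] := by
  rw [cyc, show List.range 2 = [0, 1] from rfl]
  simp

lemma cyc3 (S : List ℕ) (i : ℕ) :
    cyc S i 3 = [S.getD (i % S.length) 0, S.getD ((i+1) % S.length) 0,
      S.getD ((i+2) % S.length) 0] := by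
  rw [cyc, show List.range 3 = [0, 1, 2] from rfl]
  simp

lemma two_count (n p1 p2 : ℕ) (hne : p1 ≠ p2) (h1 : p1 < n) (h2 : p2 < n) :
    ((List.range n).filter (fun i => decide (i = p1 ∨ i = p2))).length = 2 := by
  have nd := (List.nodup_range (n := n)).filter (fun i => decide (i = p1 ∨ i = p2))
  rw [← List.toFinset_card_of_nodup nd, List.toFinset_filter]
  have hrange : (List.range n).toFinset = Finset.range n := by ext x; simp
  rw [hrange]
  have hfe : Finset.filter (fun x => (decide (x = p1 ∨ x = p2)) = true) (Finset.range n)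
      = {p1, p2} := by
    ext x
    simp only [Finset.mem_filter, Finset.mem_range, decide_eq_true_eq, Finset.mem_insert,
      Finset.mem_singleton]
    constructor
    · tauto
    · rintro (rfl | rfl) <;> simp [h1, h2]
  rw [hfe, Finset.card_pair hne]


end Aux

/-- for a < σ-1 and b < σ, the 2-gram `ab` occurs exactly twice
cyclically in S_σ, and its set of 3-gram extensions is exactly {a, a+1}. -/


theorem stmt2 (σ : ℕ) (hσ : 2 ≤ σ) (a b : ℕ) (ha : a < σ - 1) (hb : b < σ) :
    cOcc (Sstr σ) [a, b] = 2 ∧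
    {c | c < σ ∧ cOccurs (Sstr σ) [a, b, c]} = ({a, a + 1} : Set ℕ) := by
  have hlen : (Sstr σ).length = 2*σ^2 := Sstr_len σ hσ
  have hnn := nval σ hσ
  set P1 := (2*σ+2)*a + 2*b with hP1
  set P2 := (if b+1 = σ then (2*σ+2)*a+2*σ else (2*σ+2)*b+2*a+1) with hP2
  obtain ⟨hB1, hv10, hv11, hv12⟩ := occ1 σ a b hσ ha hb
  have hocc2 : P2 + 2 < 2*σ^2 ∧ (Sstr σ).getD P2 0 = a ∧
      (Sstr σ).getD (P2+1) 0 = b ∧ (Sstr σ).getD (P2+2) 0 = a+1 := by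
    rw [hP2]
    by_cases hbs : b + 1 = σ
    · rw [if_pos hbs]
      obtain ⟨h0, h1, h2, h3⟩ := occ2a σ a hσ ha
      exact ⟨h0, h1, by rw [h2]; omega, h3⟩
    · rw [if_neg hbs]
      exact occ2b σ a b hσ ha (by omega)
  obtain ⟨hB2, hv20, hv21, hv22⟩ := hocc2
  have hne : P1 ≠ P2 := by
    have e1 : (2*σ+2)*a = 2*((σ+1)*a) := by ring
    have e2 : (2*σ+2)*b = 2*((σ+1)*b) := by ring
    rw [hP1, hP2]
    by_cases hbs : b + 1 = σ
    · rw [if_pos hbs]; omega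
    · rw [if_neg hbs]; omega
  -- characterize occurrences of the 2-gram
  have hchar : ∀ i < 2*σ^2,
      (cyc (Sstr σ) i 2 = [a, b] ↔ i = P1 ∨ i = P2) := by
    intro i hi
    rw [cyc2, hlen, Nat.mod_eq_of_lt hi]
    constructor
    · intro h
      have h1 : (Sstr σ).getD i 0 = a := by injection h
      have h2 : (Sstr σ).getD ((i+1) % (2*σ^2)) 0 = b := by
        injection h with _ h'; injection h'
      exact classify σ a b i hσ ha hb hi h1 h2
    · rintro (rfl | rfl)
      · rw [Nat.mod_eq_of_lt (by omega), hv10, hv11]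
      · rw [Nat.mod_eq_of_lt (by omega), hv20, hv21]
  constructor
  · -- the count
    rw [cOcc, hlen, show ([a,b] : List ℕ).length = 2 from rfl]
    rw [List.filter_congr (fun i hi => ?_), two_count (2*σ^2) P1 P2 hne (by omega) (by omega)]
    rw [List.mem_range] at hi
    simp only [decide_eq_decide]
    exact hchar i hi
  · -- the extension set
    ext c
    simp only [Set.mem_setOf_eq, Set.mem_insert_iff, Set.mem_singleton_iff]
    constructor
    · rintro ⟨hc, hocc⟩
      rw [cOccurs, cOcc, List.length_pos_iff] at hocc
      obtain ⟨i, hi⟩ := List.exists_mem_of_ne_nil _ hocc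
      rw [List.mem_filter, List.mem_range, hlen] at hi
      obtain ⟨hiR, hicyc⟩ := hi
      rw [show ([a,b,c] : List ℕ).length = 3 from rfl] at hicyc
      have hicyc' := of_decide_eq_true hicyc
      rw [cyc3, hlen, Nat.mod_eq_of_lt hiR] at hicyc'
      have h1 : (Sstr σ).getD i 0 = a := by injection hicyc'
      have h2 : (Sstr σ).getD ((i+1) % (2*σ^2)) 0 = b := by
        injection hicyc' with _ h'; injection h'
      have h3 : (Sstr σ).getD ((i+2) % (2*σ^2)) 0 = c := by
        injection hicyc' with _ h'; injection h' with _ h''; injection h''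
      rcases classify σ a b i hσ ha hb hiR h1 h2 with rfl | rfl
      · left
        rw [Nat.mod_eq_of_lt (by omega), hv12] at h3
        omega
      · right
        rw [Nat.mod_eq_of_lt (by omega), hv22] at h3
        omega
    · intro hc
      have key : ∀ p, p + 2 < 2*σ^2 → (Sstr σ).getD p 0 = a →
          (Sstr σ).getD (p+1) 0 = b → (Sstr σ).getD (p+2) 0 = c →
          c < σ ∧ cOccurs (Sstr σ) [a, b, c] := by
        intro p hp h0 h1 h2
        have hcσ : c < σ := by
          rcases hc with rfl | rfl
          · omega
          · omega
        refine ⟨hcσ, ?_⟩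
        rw [cOccurs, cOcc, List.length_pos_iff]
        refine List.ne_nil_of_mem (a := p) ?_
        rw [List.mem_filter, List.mem_range, hlen]
        refine ⟨by omega, decide_eq_true ?_⟩
        rw [show ([a,b,c] : List ℕ).length = 3 from rfl, cyc3, hlen,
          Nat.mod_eq_of_lt (by omega), Nat.mod_eq_of_lt (by omega),
          Nat.mod_eq_of_lt (by omega), h0, h1, h2]
      rcases hc with rfl | rfl
      · exact key P1 hB1 hv10 hv11 hv12
      · exact key P2 hB2 hv20 hv21 hv22
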